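/- arXiv:1504.03988 — 3 statements merged into one kernel-verified Lean document; each statement's English description precedes it below -/
import Mathlib

section
/- If a_1...a_n is a significant block of a subshift X, then a_1...a_{n-1} is also a significant block of X. -/
open Set Filter Topology

/-- The natural extension of a one-sided subshift: bisequences all of whose
right tails lie in `Xp`. -/
def natExt {A : Type*} (Xp : Set (ℕ → A)) : Set (ℤ → A) :=
  {x | ∀ p : ℤ, (fun n : ℕ => x (p + n)) ∈ Xp}

/-- The bisequence `x` ends at position `0` with the block `w`,
i.e. `w = x_{-(|w|-1)} ... x_0`. -/
def EndsWith {A : Type*} (x : ℤ → A) (w : List A) : Prop :=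
  ∀ i : Fin w.length, x ((i.1 : ℤ) - ((w.length : ℤ) - 1)) = w.get i

/-- The block `w` occurs somewhere in the bisequence `x`. -/
def OccursZ {A : Type*} (w : List A) (x : ℤ → A) : Prop :=
  ∃ p : ℤ, ∀ i : Fin w.length, x (p + i.1) = w.get i

/-- The language of a set of bisequences. -/
def LangZ {A : Type*} (XZ : Set (ℤ → A)) (w : List A) : Prop :=
  ∃ x ∈ XZ, OccursZ w x

/-- The block `w` occurs at position `p` in the one-sided sequence `a`. -/
def OccursAt {A : Type*} (w : List A) (a : ℕ → A) (p : ℕ) : Prop :=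
  ∀ i : Fin w.length, a (p + i.1) = w.get i

/-- The block `w` occurs somewhere in the one-sided sequence `a`. -/
def OccursN {A : Type*} (w : List A) (a : ℕ → A) : Prop :=
  ∃ p : ℕ, OccursAt w a p

/-- The language of a set of one-sided sequences. -/
def LangN {A : Type*} (Xp : Set (ℕ → A)) (w : List A) : Prop :=
  ∃ a ∈ Xp, OccursN w a

/-- The follower set of the block `w` (read as `a_{-n} ... a_0`) in the
two-sided set `XZ`: the right rays `b_0 b_1 ...` of points `b ∈ XZ`
with `b_{-n} ... b_0 = w`. -/
def fol {A : Type*} (XZ : Set (ℤ → A)) (w : List A) : Set (ℕ → A) :=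
  {r | ∃ b ∈ XZ, EndsWith b w ∧ ∀ n : ℕ, r n = b (n : ℤ)}

/-- A block is significant if its follower set strictly decreases when its
first letter is prepended (i.e. `fol w ⊊ fol (w.tail)`). -/
def Significant {A : Type*} (XZ : Set (ℤ → A)) (w : List A) : Prop :=
  w ≠ [] ∧ fol XZ w ⊂ fol XZ w.tail

/-- `SigForm XZ w v` says `v = sig(w)`: `v` is the longest significant suffix
of `w`. -/
def SigForm {A : Type*} (XZ : Set (ℤ → A)) (w v : List A) : Prop :=
  v <:+ w ∧ Significant XZ v ∧
    ∀ v' : List A, v' <:+ w → Significant XZ v' → v'.length ≤ v.length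

/-- Arrow `u → v` of the Hofbauer–Buzzi diagram: both are significant blocks,
`u` extended by the last letter `a` of `v` is in the language, and
`v = sig(u a)`. -/
def Arrow {A : Type*} (XZ : Set (ℤ → A)) (u v : List A) : Prop :=
  Significant XZ u ∧ ∃ a : A, v.getLast? = some a ∧ LangZ XZ (u ++ [a]) ∧
    SigForm XZ (u ++ [a]) v

/-- A (nonempty closed shift-invariant) one-sided subshift. -/
def IsSubshift {A : Type*} [TopologicalSpace A] (Xp : Set (ℕ → A)) : Prop :=
  Xp.Nonempty ∧ IsClosed Xp ∧ ∀ x ∈ Xp, (fun n => x (n + 1)) ∈ Xp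

/-- The complexity function of a one-sided sequence. -/
noncomputable def Complexity {A : Type*} (u : ℕ → A) (n : ℕ) : ℕ :=
  Set.ncard {w : List A | w.length = n ∧ OccursN w u}

/-- The orbit closure of `u` under the shift, described combinatorially:
all sequences each of whose blocks occurs in `u`. -/
def OrbitClosure {A : Type*} (u : ℕ → A) : Set (ℕ → A) :=
  {x | ∀ w : List A, OccursN w x → OccursN w u}

/-- The Prouhet–Thue–Morse sequence: parity of the binary digit sum. -/
def morse (n : ℕ) : Fin 2 := Fin.ofNat 2 ((Nat.digits 2 n).sum : ℕ)


private lemma natExt_shift {A : Type*} {Xp : Set (ℕ → A)} {x : ℤ → A}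
    (hx : x ∈ natExt Xp) (c : ℤ) : (fun k => x (k + c)) ∈ natExt Xp := by
  intro p
  have := hx (p + c)
  convert this using 2 with n
  ring_nf

private lemma endsWith_tail {A : Type*} {x : ℤ → A} {w : List A}
    (h : EndsWith x w) : EndsWith x w.tail := by
  intro i
  have hlen : w.tail.length = w.length - 1 := w.length_tail
  have hi : (i : ℕ) + 1 < w.length := by
    have := i.2; omega
  have := h ⟨i + 1, hi⟩
  have hget : w.tail.get i = w.get ⟨i + 1, hi⟩ := by
    simp [List.get_tail]
  rw [hget]
  rw [← this]
  congr 1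
  have h1 : 1 ≤ w.length := by omega
  have : (w.tail.length : ℤ) = (w.length : ℤ) - 1 := by
    rw [hlen]; push_cast [Nat.cast_sub h1]; ring
  rw [this]; push_cast; ring

private lemma fol_subset_tail {A : Type*} (XZ : Set (ℤ → A)) (w : List A) :
    fol XZ w ⊆ fol XZ w.tail := by
  rintro r ⟨b, hb, hbe, hr⟩
  exact ⟨b, hb, endsWith_tail hbe, hr⟩

private lemma tail_dropLast_comm {A : Type*} (l : List A) :
    l.dropLast.tail = l.tail.dropLast := by
  rcases l with _|⟨a,l⟩
  · simp
  rcases l with _|⟨b,m⟩ <;> simp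

/-- If `a_1...a_n` is a significant block of a subshift `X`,
then `a_1...a_{n-1}` is also a significant block of `X`. -/
theorem stmt_0 {A : Type*} [Fintype A] [TopologicalSpace A] [DiscreteTopology A]
    (Xp : Set (ℕ → A)) (hX : IsSubshift Xp) (w : List A) (hw : 2 ≤ w.length)
    (hsig : Significant (natExt Xp) w) :
    Significant (natExt Xp) w.dropLast := by
  have hne := hsig.1
  have hnsub : ¬ fol (natExt Xp) w.tail ⊆ fol (natExt Xp) w := hsig.2.not_subset
  set L := w.length with hL
  constructor
  · intro h
    have := congrArg List.length h
    simp [List.length_dropLast] at this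
    omega
  rw [Set.ssubset_iff_subset_ne]
  refine ⟨fol_subset_tail _ _, ?_⟩
  intro heq
  apply hnsub
  -- show fol (tail w) ⊆ fol w
  rintro r ⟨b, hb, hbe, hr⟩
  have hlt : w.tail.length = L - 1 := w.length_tail
  have hdl : w.dropLast.length = L - 1 := w.length_dropLast
  -- shift b left by one
  set b' : ℤ → A := fun k => b (k - 1) with hb'def
  have hb' : b' ∈ natExt Xp := natExt_shift hb (-1)
  have hbe' : EndsWith b' w.tail.dropLast := by
    intro i
    have hi2 : (i : ℕ) < w.tail.length := by
      have := i.2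
      simp [List.length_dropLast] at this
      omega
    have hget : w.tail.dropLast.get i = w.tail.get ⟨i, hi2⟩ := by
      simp [List.getElem_dropLast]
    rw [hget]
    have := hbe ⟨i, hi2⟩
    rw [← this]
    have hlen1 : (w.tail.dropLast.length : ℤ) = (L : ℤ) - 2 := by
      have : w.tail.dropLast.length = L - 2 := by
        rw [List.length_dropLast, hlt]; omega
      rw [this]; push_cast [Nat.cast_sub hw]; ring
    have hlen2 : (w.tail.length : ℤ) = (L : ℤ) - 1 := by
      rw [hlt]
      have h1 : 1 ≤ L := by omega
      push_cast [Nat.cast_sub h1]; ring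
    simp only [hb'def, hlen1, hlen2]
    congr 1
    ring
  have hr' : (fun n : ℕ => b' (n : ℤ)) ∈ fol (natExt Xp) w.dropLast.tail := by
    rw [tail_dropLast_comm]
    exact ⟨b', hb', hbe', fun n => rfl⟩
  rw [← heq] at hr'
  obtain ⟨c, hc, hce, hrc⟩ := hr'
  -- shift c right by one
  refine ⟨fun k => c (k + 1), natExt_shift hc 1, ?_, ?_⟩
  · intro i
    have hcast : ((w.length : ℤ)) = (L : ℤ) := rfl
    by_cases hlast : (i : ℕ) = L - 1
    · -- last letter of w
      have hpos : ((i : ℕ) : ℤ) - ((L : ℤ) - 1) + 1 = 1 := by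
        have h1 : 1 ≤ L := by omega
        have : ((i : ℕ) : ℤ) = (L : ℤ) - 1 := by
          rw [hlast]; push_cast [Nat.cast_sub h1]; ring
        rw [this]; ring
      show c (((i : ℕ) : ℤ) - ((w.length : ℤ) - 1) + 1) = w.get i
      rw [hcast, hpos]
      have h1 : c (1 : ℤ) = b' (1 : ℤ) := by
        have := hrc 1; push_cast at this; exact this.symm
      have h2 : b' (1 : ℤ) = b 0 := by simp [hb'def]
      have hi3 : L - 2 < w.tail.length := by omega
      have h3 := hbe ⟨L - 2, hi3⟩
      have hpos2 : ((L - 2 : ℕ) : ℤ) - ((w.tail.length : ℤ) - 1) = 0 := by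
        rw [hlt]
        have h2L : 2 ≤ L := hw
        push_cast [Nat.cast_sub h2L, Nat.cast_sub (by omega : 1 ≤ L)]
        ring
      rw [hpos2] at h3
      have hget : w.tail.get ⟨L - 2, hi3⟩ = w.get i := by
        have : w.tail.get ⟨L - 2, hi3⟩ = w.get ⟨L - 2 + 1, by omega⟩ := by
          simp [List.get_tail]
        rw [this]
        congr 1
        exact Fin.ext (by simp only []; omega)
      rw [h1, h2, h3, hget]
    · -- i within dropLast
      have hi4 : (i : ℕ) < w.dropLast.length := by
        have := i.2; omega
      have h5 := hce ⟨i, hi4⟩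
      have hget : w.dropLast.get ⟨i, hi4⟩ = w.get i := by
        simp [List.getElem_dropLast]
      rw [hget] at h5
      show c (((i : ℕ) : ℤ) - ((w.length : ℤ) - 1) + 1) = w.get i
      rw [← h5]
      congr 1
      have : (w.dropLast.length : ℤ) = (L : ℤ) - 1 := by
        rw [hdl]
        push_cast [Nat.cast_sub (by omega : 1 ≤ L)]; ring
      rw [this, hcast]
      try ring
  · intro n
    have h1 : c ((n + 1 : ℕ) : ℤ) = b' ((n + 1 : ℕ) : ℤ) := (hrc (n + 1)).symm
    have h2 : b' ((n + 1 : ℕ) : ℤ) = b ((n : ℕ) : ℤ) := by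
      simp [hb'def]
    rw [hr n]
    show b ((n:ℕ):ℤ) = c (((n:ℕ):ℤ) + 1)
    rw [← h2, ← h1]
    congr 1
end

section
/- Let X be a subshift with HB diagram 𝒟. If α_0 → ⋯ → α_{n-1} and β_0 → ⋯ → β_{n-1} are two paths of length n on 𝒟 whose initial vertices α_0 and β_0 are blocks of length 1, then the projected blocks (formed by reading the last letter of each vertex) are equal if and only if α_i = β_i for all 0 ≤ i ≤ n−1. -/
open Set Filter Topology

lemma suffix_eq_of_length_eq {A : Type*} {v v' w : List A}
    (h : v <:+ w) (h' : v' <:+ w) (hl : v.length = v'.length) : v = v' := by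
  obtain ⟨t, rfl⟩ := h
  obtain ⟨t', he⟩ := h'
  have hlt : t.length = t'.length := by
    have := congrArg List.length he
    simp [List.length_append, hl] at this
    omega
  have := congrArg (List.drop t.length) he
  simpa [List.drop_left, hlt, List.drop_left'] using this.symm

lemma sigform_unique {A : Type*} {XZ : Set (ℤ → A)} {w v v' : List A}
    (h : SigForm XZ w v) (h' : SigForm XZ w v') : v = v' := by
  obtain ⟨hs, hsig, hmax⟩ := h
  obtain ⟨hs', hsig', hmax'⟩ := h'
  exact suffix_eq_of_length_eq hs hs'
    (le_antisymm (hmax' v hs hsig) (hmax v' hs' hsig'))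

lemma eq_singleton_of_length_one {A : Type*} {l : List A} {x : A}
    (h1 : l.length = 1) (h2 : l.getLast? = some x) : l = [x] := by
  match l, h1 with
  | [c], _ => simp_all

/-- If `α_0 → ⋯ → α_{n-1}` and `β_0 → ⋯ → β_{n-1}` are two paths
of length `n` on the HB diagram whose initial vertices are blocks of length 1,
then the projected blocks (last letters) are equal iff `α_i = β_i` for all
`0 ≤ i ≤ n-1`. -/
theorem stmt_8 {A : Type*} [Fintype A] [TopologicalSpace A] [DiscreteTopology A]
    (Xp : Set (ℕ → A)) (hX : IsSubshift Xp) (n : ℕ) (hn : 1 ≤ n)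
    (α β : ℕ → List A) (a b : ℕ → A)
    (hα0 : Significant (natExt Xp) (α 0) ∧ (α 0).length = 1)
    (hβ0 : Significant (natExt Xp) (β 0) ∧ (β 0).length = 1)
    (hαpath : ∀ i : ℕ, i + 1 < n → Arrow (natExt Xp) (α i) (α (i + 1)))
    (hβpath : ∀ i : ℕ, i + 1 < n → Arrow (natExt Xp) (β i) (β (i + 1)))
    (hαlast : ∀ i : ℕ, i < n → (α i).getLast? = some (a i))
    (hβlast : ∀ i : ℕ, i < n → (β i).getLast? = some (b i)) :
    (∀ i : ℕ, i < n → a i = b i) ↔ (∀ i : ℕ, i < n → α i = β i) := by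
  constructor
  · intro h i
    induction i with
    | zero =>
      intro h0
      rw [eq_singleton_of_length_one hα0.2 (hαlast 0 h0),
        eq_singleton_of_length_one hβ0.2 (hβlast 0 h0), h 0 h0]
    | succ i ih =>
      intro hin
      have hii : i < n := by omega
      obtain ⟨_, c, hc, _, hsα⟩ := hαpath i hin
      obtain ⟨_, c', hc', _, hsβ⟩ := hβpath i hin
      have hca : c = a (i + 1) := by
        have := hαlast (i + 1) hin; rw [hc] at this; exact (Option.some_inj.mp this)
      have hcb : c' = b (i + 1) := by
        have := hβlast (i + 1) hin; rw [hc'] at this; exact (Option.some_inj.mp this)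
      rw [hca] at hsα
      rw [hcb, ← h (i + 1) hin] at hsβ
      rw [← ih hii] at hsβ
      exact sigform_unique hsα hsβ
  · intro h i hi
    have := hαlast i hi
    rw [h i hi, hβlast i hi] at this
    exact (Option.some_inj.mp this).symm
end

section
/- If X⁺ is a one-sided subshift such that its natural extension X̃ is infinite and minimal, then the eventually Markov part of X̃ is empty: no point x ∈ X̃ is eventually Markov at any time p ∈ ℤ. -/
open Set Filter Topology

lemma shift_mem_natExt {A : Type*} {Xp : Set (ℕ → A)} {x : ℤ → A}
    (hx : x ∈ natExt Xp) (n : ℤ) : (fun k => x (k + n)) ∈ natExt Xp := by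
  intro t
  have h := hx (t + n)
  have he : (fun i : ℕ => x (t + (i:ℤ) + n)) = fun i : ℕ => x (t + n + (i:ℤ)) := by
    funext i; congr 1; omega
  simpa [he] using h

lemma endsWith_ofFn_iff {A : Type*} {b : ℤ → A} {x : ℤ → A} {p : ℤ} {n : ℕ} :
    EndsWith b (List.ofFn fun i : Fin (n+1) => x (p - n + i.1)) ↔
    ∀ j : ℕ, j ≤ n → b (-(j:ℤ)) = x (p - j) := by
  simp only [EndsWith, List.length_ofFn, List.get_ofFn, Fin.forall_iff, Fin.cast]
  constructor
  · intro h j hj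
    have := h (n - j) (by omega)
    have e1 : ((n - j : ℕ) : ℤ) - (((n+1 : ℕ)) - 1) = -(j:ℤ) := by omega
    have e2 : p - (n:ℕ) + ((n - j : ℕ) : ℤ) = p - j := by push_cast [hj]; omega
    rw [e1, e2] at this; exact this
  · intro h i hi
    have := h (n - i) (by omega)
    have e1 : ((n - i : ℕ) : ℤ) = (n:ℤ) - i := by push_cast [Nat.le_of_lt_succ hi]; ring
    rw [e1] at this
    have e2 : -((n:ℤ) - i) = (i:ℤ) - (((n+1:ℕ):ℤ) - 1) := by push_cast; ring
    have e3 : p - ((n:ℤ) - i) = p - (n:ℕ) + i := by push_cast; ring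
    rw [e2, e3] at this; exact this

lemma mem_fol_ofFn {A : Type*} {X : Set (ℤ → A)} {x : ℤ → A} {p : ℤ} {n : ℕ}
    {r : ℕ → A} :
    r ∈ fol X (List.ofFn fun i : Fin (n+1) => x (p - n + i.1)) ↔
    ∃ b ∈ X, (∀ j : ℕ, j ≤ n → b (-(j:ℤ)) = x (p - j)) ∧ ∀ k : ℕ, r k = b k := by
  simp only [fol, mem_setOf_eq, endsWith_ofFn_iff]

lemma cylinder_open {A : Type*} [TopologicalSpace A] [DiscreteTopology A]
    (c : ℤ → A) (F : Finset ℤ) : IsOpen {y : ℤ → A | ∀ i ∈ F, y i = c i} := by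
  have he : {y : ℤ → A | ∀ i ∈ F, y i = c i}
      = ⋂ i ∈ F, (fun y : ℤ → A => y i) ⁻¹' {c i} := by
    ext y; simp
  rw [he]
  exact isOpen_biInter_finset fun i _ =>
    (continuous_apply i).isOpen_preimage _ (isOpen_discrete _)

lemma mem_of_approx {A : Type*} [TopologicalSpace A] {Xp : Set (ℕ → A)} (hcl : IsClosed Xp)
    {r : ℕ → A} (h : ∀ n : ℕ, ∃ a ∈ Xp, ∀ i ≤ n, a i = r i) : r ∈ Xp := by
  choose a ha hae using h
  have ht : Tendsto a atTop (𝓝 r) := by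
    rw [tendsto_pi_nhds]
    intro i
    apply Filter.Tendsto.congr' _ tendsto_const_nhds
    filter_upwards [eventually_ge_atTop i] with n hn
    exact (hae n i hn).symm
  exact hcl.mem_of_tendsto ht (Filter.Eventually.of_forall ha)

/-- The eventually-periodic future pattern: `m` copies of the period block then
the ray of `x` at `q`. -/
def auxS {A : Type*} (x : ℤ → A) (q d : ℤ) (m : ℤ) (j : ℤ) : A :=
  if j < m * d then x (q + j % d) else x (q + j - m * d)

/-- The past of `x` up to `p` glued with the future pattern `auxS`. -/
def auxV {A : Type*} (x : ℤ → A) (p q d : ℤ) (m : ℤ) (k : ℤ) : A :=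
  if k ≤ p then x k else auxS x q d m (k - p)

lemma auxS_succ {A : Type*} (x : ℤ → A) (p q d : ℤ) (hd : 1 ≤ d) (hpq : p = q + d)
    (hqp : x q = x p) (m : ℤ) (hm : 0 ≤ m) (k : ℤ) (hk : 0 ≤ k) :
    auxS x q d (m+1) k = auxV x p q d m (k + q) := by
  have hmd : m * d + d = (m+1) * d := by ring
  have hmd0 : 0 ≤ m * d := mul_nonneg hm (by omega)
  simp only [auxS, auxV]
  by_cases h1 : k + q ≤ p
  · rw [if_pos h1]
    by_cases h2 : k < d
    · rw [if_pos (by omega : k < (m+1) * d), Int.emod_eq_of_lt hk h2]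
      congr 1; ring
    · have hkd : k = d := by omega
      rw [hkd]
      have hx2 : x (d + q) = x p := by rw [hpq]; congr 1; ring
      by_cases h3 : d < (m+1) * d
      · rw [if_pos h3, Int.emod_self, add_zero, hqp, hx2]
      · rw [if_neg h3]
        have h4 : (m+1) * d = d := by omega
        rw [h4, show q + d - d = q by ring, hqp]
        exact hx2.symm
  · rw [if_neg h1]
    have hkd : d < k := by omega
    have e : k + q - p = k - d := by omega
    rw [e]
    by_cases h3 : k - d < m * d
    · rw [if_pos (by omega : k < (m+1) * d), if_pos h3]
      have : k % d = (k - d) % d := by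
        conv_lhs => rw [show k = (k - d) + d * 1 by ring]
        rw [Int.add_mul_emod_self_left]
      rw [this]
    · rw [if_neg (by omega : ¬ k < (m+1) * d), if_neg h3]
      congr 1; ring

/-- If `X⁺` is a one-sided subshift whose natural extension `X̃`
is infinite and minimal, then no point of `X̃` is eventually Markov at any
time `p ∈ ℤ`. -/
theorem stmt_13 {A : Type*} [Fintype A] [TopologicalSpace A] [DiscreteTopology A]
    (Xp : Set (ℕ → A)) (hX : IsSubshift Xp)
    (hinf : (natExt Xp).Infinite)
    (hmin : ∀ x ∈ natExt Xp,
      natExt Xp ⊆ closure {y : ℤ → A | ∃ n : ℤ, y = fun k => x (k + n)}) :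
    ∀ x ∈ natExt Xp, ∀ p : ℤ,
      ¬ ∃ N : ℕ, ∀ n : ℕ, N ≤ n →
        fol (natExt Xp) (List.ofFn (fun i : Fin (n + 1) => x (p - n + i.1))) =
        fol (natExt Xp) (List.ofFn (fun i : Fin (N + 1) => x (p - N + i.1))) := by
  intro x hx p
  rintro ⟨N, hM⟩
  -- `natExt Xp` is closed
  have hXcl : IsClosed (natExt Xp) := by
    have he : natExt Xp = ⋂ t : ℤ, (fun c : ℤ → A => fun i : ℕ => c (t + i)) ⁻¹' Xp := by
      ext c; simp [natExt, Set.mem_iInter]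
    rw [he]
    exact isClosed_iInter fun t =>
      IsClosed.preimage (continuous_pi fun i : ℕ => continuous_apply (t + (i:ℤ))) hX.2.1
  -- find a far-left occurrence of the word `w = x_{p-N..p}`
  obtain ⟨q, hqle, hq⟩ : ∃ q : ℤ, q + (N+1 : ℤ) ≤ p ∧
      ∀ j : ℕ, j ≤ N → x (q - j) = x (p - j) := by
    set g : ℕ → (ℤ → A) := fun m => fun k => x (k - m) with hg
    have hgX : ∀ m : ℕ, g m ∈ natExt Xp := by
      intro m
      have := shift_mem_natExt hx (-(m:ℤ))
      simpa [hg, sub_eq_add_neg] using this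
    have hle : map g atTop ≤ 𝓟 (natExt Xp) := by
      rw [le_principal_iff, mem_map]
      exact Filter.Eventually.of_forall hgX
    obtain ⟨z, hzX, hz⟩ := (hXcl.isCompact).exists_clusterPt hle
    have hxcl := hmin z hzX hx
    obtain ⟨y, hy1, n, hy2⟩ :
        ∃ y, (∀ i ∈ Finset.image (fun j : ℕ => p - (j:ℤ)) (Finset.range (N+1)), y i = x i)
          ∧ ∃ n : ℤ, y = fun k => z (k + n) := by
      obtain ⟨y, hyo, hyorb⟩ := mem_closure_iff.1 hxcl _
        (cylinder_open x (Finset.image (fun j : ℕ => p - (j:ℤ)) (Finset.range (N+1))))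
        (fun i _ => rfl)
      exact ⟨y, hyo, hyorb⟩
    have hzn : ∀ j : ℕ, j ≤ N → z (p - j + n) = x (p - j) := by
      intro j hj
      have h1 := hy1 (p - j)
        (Finset.mem_image.2 ⟨j, Finset.mem_range.2 (by omega), rfl⟩)
      rw [hy2] at h1
      exact h1
    have hVz : {y : ℤ → A |
        ∀ i ∈ Finset.image (fun j : ℕ => p - (j:ℤ) + n) (Finset.range (N+1)),
          y i = x (i - n)} ∈ 𝓝 z := by
      apply IsOpen.mem_nhds (cylinder_open (fun i => x (i - n)) _)
      intro i hi
      obtain ⟨j, hj, rfl⟩ := Finset.mem_image.1 hi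
      have h2 := hzn j (Nat.lt_succ_iff.1 (Finset.mem_range.1 hj))
      rw [h2, show p - (j:ℤ) + n - n = p - j by ring]
    have hW : {y : ℤ → A | ∃ m : ℕ, (n + N + 1).toNat ≤ m ∧ g m = y} ∈ map g atTop := by
      rw [mem_map]
      filter_upwards [eventually_ge_atTop (n + N + 1).toNat] with m hm
      exact ⟨m, hm, rfl⟩
    obtain ⟨y', hy'V, m, hm, rfl⟩ := clusterPt_iff_nonempty.1 hz hVz hW
    refine ⟨p + n - m, ?_, ?_⟩
    · have h3 : (n + (N:ℤ) + 1) ≤ ((n + N + 1).toNat : ℤ) := Int.self_le_toNat _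
      have h4 : ((n + N + 1).toNat : ℤ) ≤ (m:ℤ) := by exact_mod_cast hm
      omega
    · intro j hj
      have h1 := hy'V (p - j + n)
        (Finset.mem_image.2 ⟨j, Finset.mem_range.2 (by omega), rfl⟩)
      simp only [hg] at h1
      rw [show p + n - (m:ℤ) - (j:ℤ) = p - j + n - m by ring, h1,
        show p - (j:ℤ) + n - n = p - j by ring]
  set d : ℤ := p - q with hdq
  have hd1 : 1 ≤ d := by omega
  have hpq : p = q + d := by omega
  have hqp : x q = x p := by simpa using hq 0 (Nat.zero_le N)
  -- gluing lemma
  have hglue : ∀ m : ℕ,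
      (fun k : ℕ => auxS x q d m k) ∈
        fol (natExt Xp) (List.ofFn fun i : Fin (N+1) => x (p - N + i.1)) →
      auxV x p q d m ∈ natExt Xp := by
    intro m hs t
    set n : ℕ := N + (p - t).toNat with hn
    have hnN : N ≤ n := Nat.le_add_right _ _
    have hnt : p - t ≤ (n:ℤ) := by
      have := Int.self_le_toNat (p - t)
      omega
    rw [← hM n hnN, mem_fol_ofFn] at hs
    obtain ⟨b, hbX, hpast, hray⟩ := hs
    have hc := shift_mem_natExt hbX (-p)
    have he : (fun i : ℕ => auxV x p q d m (t + i)) = fun i : ℕ => b (t + i + -p) := by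
      funext i
      by_cases hip : t + (i:ℤ) ≤ p
      · have hjn : (p - (t + i)).toNat ≤ n := by
          have := Int.toNat_of_nonneg (show (0:ℤ) ≤ p - (t + i) by omega)
          omega
        have hb := hpast _ hjn
        have hj : ((p - (t + (i:ℤ))).toNat : ℤ) = p - (t + i) :=
          Int.toNat_of_nonneg (by omega)
        simp only [auxV, if_pos hip]
        have e1 : t + (i:ℤ) + -p = -(((p - (t + (i:ℤ))).toNat : ℤ)) := by omega
        have e2 : p - ((p - (t + (i:ℤ))).toNat : ℤ) = t + i := by omega
        rw [e1, hb, e2]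
      · have hj : ((t + (i:ℤ) - p).toNat : ℤ) = t + i - p := Int.toNat_of_nonneg (by omega)
        have hb := hray (t + (i:ℤ) - p).toNat
        simp only [auxV, if_neg hip]
        have e1 : t + (i:ℤ) + -p = (((t + (i:ℤ) - p).toNat : ℤ)) := by omega
        rw [e1, ← hb, hj]
    have := hc t
    rw [show (fun i : ℕ => auxV x p q d m (t + i)) ∈ Xp ↔
        (fun i : ℕ => b (t + i + -p)) ∈ Xp by rw [he]]
    exact this
  -- key induction
  have key : ∀ m : ℕ,
      (fun k : ℕ => auxS x q d m k) ∈
        fol (natExt Xp) (List.ofFn fun i : Fin (N+1) => x (p - N + i.1)) := by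
    intro m
    induction m with
    | zero =>
      rw [mem_fol_ofFn]
      refine ⟨fun k => x (k + q), shift_mem_natExt hx q, ?_, ?_⟩
      · intro j hj
        have := hq j hj
        simpa [show -(j:ℤ) + q = q - j by ring] using this
      · intro k
        simp only [auxS, Nat.cast_zero, zero_mul, mul_zero, sub_zero]
        rw [if_neg (not_lt.mpr (Int.natCast_nonneg k))]
        congr 1
        ring
    | succ m ih =>
      have hvm := hglue m ih
      rw [mem_fol_ofFn]
      refine ⟨fun k => auxV x p q d m (k + q), shift_mem_natExt hvm q, ?_, ?_⟩
      · intro j hj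
        simp only [auxV, if_pos (show -(j:ℤ) + q ≤ p by omega)]
        rw [show -(j:ℤ) + q = q - j by ring]
        exact hq j hj
      · intro k
        have := auxS_succ x p q d hd1 hpq hqp m (by positivity) k (by positivity)
        rw [show ((m+1 : ℕ) : ℤ) = (m:ℤ) + 1 by push_cast; ring]
        exact this
  have hv : ∀ m : ℕ, auxV x p q d m ∈ natExt Xp := fun m => hglue m (key m)
  -- the periodic point
  set π : ℤ → A := fun k => x (q + (k - q) % d) with hπ
  have hπX : π ∈ natExt Xp := by
    intro t
    apply mem_of_approx hX.2.1
    intro n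
    set M : ℕ := (p - t).toNat + 1 with hMdef
    have hMp : p < t + (M:ℤ) * d := by
      have h1 : (M:ℤ) * 1 ≤ (M:ℤ) * d := by
        apply mul_le_mul_of_nonneg_left hd1 (by positivity)
      have h2 : p - t ≤ ((p - t).toNat : ℤ) := Int.self_le_toNat _
      push_cast [hMdef] at h1 h2 ⊢
      omega
    set m : ℕ := (t + (M:ℤ) * d + n - p + 1).toNat with hmdef
    have hm : t + (M:ℤ) * d + (n:ℤ) - p < (m:ℤ) * d := by
      have h1 : (m:ℤ) * 1 ≤ (m:ℤ) * d := by
        apply mul_le_mul_of_nonneg_left hd1 (by positivity)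
      have h2 : t + (M:ℤ) * d + (n:ℤ) - p + 1 ≤ (m:ℤ) := Int.self_le_toNat _
      omega
    refine ⟨fun i : ℕ => auxV x p q d m (t + (M:ℤ) * d + i), hv m (t + (M:ℤ) * d), ?_⟩
    intro i hi
    have h1 : p < t + (M:ℤ) * d + i := by
      have : (0:ℤ) ≤ i := by positivity
      omega
    have h2 : t + (M:ℤ) * d + (i:ℤ) - p < (m:ℤ) * d := by
      have : (i:ℤ) ≤ n := by exact_mod_cast hi
      omega
    simp only [auxV, auxS, if_neg (not_le.mpr h1), if_pos h2, hπ]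
    have e : t + (M:ℤ) * d + (i:ℤ) - p = (t + (i:ℤ) - q) + d * ((M:ℤ) - 1) := by
      rw [hpq]; ring
    rw [e, Int.add_mul_emod_self_left]
  -- orbit of π is finite, contradiction with minimality and infinitude
  set orb := {y : ℤ → A | ∃ n : ℤ, y = fun k => π (k + n)} with horb
  have hπmod : ∀ k n : ℤ, π (k + n) = π (k + n % d) := by
    intro k n
    simp only [hπ]
    have h := Int.mul_ediv_add_emod n d
    have e : k + n - q = (k + n % d - q) + d * (n / d) := by linarith
    rw [e, Int.add_mul_emod_self_left]
  have hsub : orb ⊆ Set.range (fun i : Fin d.toNat => fun k => π (k + ((i : ℕ) : ℤ))) := by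
    rintro y ⟨n, rfl⟩
    have h0 : 0 ≤ n % d := Int.emod_nonneg n (by omega)
    have h1 : n % d < d := Int.emod_lt_of_pos n (by omega)
    refine ⟨⟨(n % d).toNat, by omega⟩, ?_⟩
    funext k
    simp only []
    rw [Int.toNat_of_nonneg h0]
    exact (hπmod k n).symm
  have hfin : orb.Finite := (Set.finite_range _).subset hsub
  have hclo : closure orb = orb := hfin.isClosed.closure_eq
  have : (natExt Xp).Finite := hfin.subset (by
    have := hmin π hπX
    rw [← horb, hclo] at this
    exact this)
  exact hinf this
end
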